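/- Let $\Lambda$ be a finite dimensional Auslander algebra, $M$ a finitely generated $\Lambda$-module with $\mathrm{pd}_\Lambda(M) \le 1$, and $S$ a simple submodule of $M$ with $\mathrm{pd}_\Lambda(S) = 2$. Then a contradiction arises; i.e., no simple submodule of a module of projective dimension at most 1 over an Auslander algebra can have projective dimension 2. -/

import Mathlib

universe u

open CategoryTheory

section Defs

variable (R : Type u) [Ring R]

/-- `pdLE R n M` : the module `M` has projective dimension at most `n`. -/
def pdLE : ℕ → ModuleCat.{u} R → Prop
  | 0, M => Module.Projective R M
  | (n+1), M => ∃ (P : ModuleCat.{u} R) (f : P →ₗ[R] M),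
      Module.Projective R P ∧ Function.Surjective f ∧
      pdLE n (ModuleCat.of R (LinearMap.ker f))

/-- The projective dimension of a module, as an element of `ℕ∞` (`⊤` if no
finite projective resolution exists). -/
noncomputable def projDim (M : ModuleCat.{u} R) : ℕ∞ :=
  sInf ((↑) '' {n : ℕ | pdLE R n M})

/-- `idLE R n M` : the module `M` has injective dimension at most `n`. -/
def idLE : ℕ → ModuleCat.{u} R → Prop
  | 0, M => Module.Injective R M
  | (n+1), M => ∃ (I : ModuleCat.{u} R) (f : M →ₗ[R] I),
      Module.Injective R I ∧ Function.Injective f ∧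
      idLE n (ModuleCat.of R (I ⧸ LinearMap.range f))

/-- The injective dimension of a module, as an element of `ℕ∞`. -/
noncomputable def injDim (M : ModuleCat.{u} R) : ℕ∞ :=
  sInf ((↑) '' {n : ℕ | idLE R n M})

/-- The global dimension (computed on finitely generated modules) is at most `n`. -/
def gldimLE (n : ℕ) : Prop :=
  ∀ M : ModuleCat.{u} R, Module.Finite R M → pdLE R n M

/-- The global dimension of `R`, computed on finitely generated modules. -/
noncomputable def globalDim : ℕ∞ :=
  sInf ((↑) '' {n : ℕ | gldimLE R n})

/-- The socle of a module: the sum of all its simple submodules. -/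
def socle (M : Type u) [AddCommGroup M] [Module R M] : Submodule R M :=
  sSup {S : Submodule R M | IsSimpleModule R S}

/-- An algebra is an Auslander algebra if its global dimension is at most `2` and
its dominant dimension is at least `2`, i.e. there is an exact sequence
`0 → R → I₀ → I₁` with `I₀`, `I₁` both projective and injective. -/
def IsAuslander : Prop :=
  gldimLE R 2 ∧
  ∃ (I₀ I₁ : ModuleCat.{u} R) (f : R →ₗ[R] I₀) (g : I₀ →ₗ[R] I₁),
    Module.Injective R I₀ ∧ Module.Projective R I₀ ∧
    Module.Injective R I₁ ∧ Module.Projective R I₁ ∧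
    Function.Injective f ∧ LinearMap.ker g = LinearMap.range f

/-- `f : M →ₗ[R] I` realizes `I` as an injective envelope of `M`: `I` is injective
and `f` is an essential embedding. -/
def IsInjectiveEnvelope {M I : Type u} [AddCommGroup M] [Module R M]
    [AddCommGroup I] [Module R I] (f : M →ₗ[R] I) : Prop :=
  Module.Injective R I ∧ Function.Injective f ∧
    ∀ N : Submodule R I, N ≠ ⊥ → N ⊓ LinearMap.range f ≠ ⊥

end Defs

namespace AusAux

open Function LinearMap

variable {Λ : Type u} [Ring Λ]

/-- Projective dimension at most one, for plain module types. -/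
def Pd1 (Λ : Type u) [Ring Λ] (A : Type u) [AddCommGroup A] [Module Λ A] : Prop :=
  ∃ (T : Type u) (_ : AddCommGroup T) (_ : Module Λ T) (F : T →ₗ[Λ] A),
    Module.Projective Λ T ∧ Function.Surjective F ∧ Module.Projective Λ (LinearMap.ker F)

theorem pd1_iff (A : Type u) [AddCommGroup A] [Module Λ A] :
    Pd1 Λ A ↔ pdLE Λ 1 (ModuleCat.of Λ A) := by
  constructor
  · rintro ⟨T, _, _, F, hT, hs, hk⟩
    exact ⟨ModuleCat.of Λ T, F, hT, hs, hk⟩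
  · rintro ⟨P, f, hP, hs, hk⟩
    exact ⟨P, inferInstance, inferInstance, f, hP, hs, hk⟩

theorem pd1_congr {A B : Type u} [AddCommGroup A] [Module Λ A] [AddCommGroup B] [Module Λ B]
    (e : A ≃ₗ[Λ] B) (h : Pd1 Λ A) : Pd1 Λ B := by
  obtain ⟨T, _, _, F, hT, hs, hk⟩ := h
  refine ⟨T, _, _, e.toLinearMap ∘ₗ F, hT, e.surjective.comp hs, ?_⟩
  have hker : LinearMap.ker (e.toLinearMap ∘ₗ F) = LinearMap.ker F := by
    ext t; simp
  rw [hker]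
  exact hk

theorem injective_pi {ι : Type} {I : Type u} [AddCommGroup I] [Module Λ I]
    (hI : Module.Injective Λ I) : Module.Injective Λ (ι → I) := by
  constructor
  intro X Y _ _ _ _ f hf g
  choose h hh using fun i => hI.out f hf ((LinearMap.proj (R := Λ) (φ := fun _ : ι => I) i) ∘ₗ g)
  refine ⟨LinearMap.pi h, fun x => ?_⟩
  funext i
  exact hh i x

theorem projective_of_surjective_of_ker {E P : Type u} [AddCommGroup E] [Module Λ E]
    [AddCommGroup P] [Module Λ P] [Module.Projective Λ P]
    (θ : E →ₗ[Λ] P) (hθ : Function.Surjective θ)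
    (hker : Module.Projective Λ (LinearMap.ker θ)) : Module.Projective Λ E := by
  obtain ⟨σ, hσ⟩ := Module.projective_lifting_property θ LinearMap.id hθ
  have hσ' : ∀ p, θ (σ p) = p := fun p => DFunLike.congr_fun hσ p
  haveI := hker
  refine Module.Projective.of_equiv'
    (M := (↥(LinearMap.ker θ) × P))
    { toFun := fun w => w.1.1 + σ w.2
      map_add' := by intro a b; simp; abel
      map_smul' := by intro r a; simp
      invFun := fun x => (⟨x - σ (θ x), by simp [hσ']⟩, θ x)
      left_inv := by
        rintro ⟨⟨w, hw⟩, p⟩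
        have hw' : θ w = 0 := hw
        ext <;> simp [hσ', hw']
      right_inv := by
        intro x
        simp }

theorem pullback_exists {A B C : Type u} [AddCommGroup A] [Module Λ A] [AddCommGroup B] [Module Λ B]
    [AddCommGroup C] [Module Λ C] (f : A →ₗ[Λ] C) (g : B →ₗ[Λ] C)
    (hf : Function.Surjective f) (hg : Function.Surjective g) :
    ∃ (Z : Submodule Λ (A × B)) (pA : Z →ₗ[Λ] A) (pB : Z →ₗ[Λ] B),
      Function.Surjective pA ∧ Function.Surjective pB ∧
      Nonempty (↥(LinearMap.ker pA) ≃ₗ[Λ] ↥(LinearMap.ker g)) ∧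
      Nonempty (↥(LinearMap.ker pB) ≃ₗ[Λ] ↥(LinearMap.ker f)) := by
  set Z : Submodule Λ (A × B) :=
    LinearMap.ker (f ∘ₗ (LinearMap.fst Λ A B) - g ∘ₗ (LinearMap.snd Λ A B)) with hZdef
  have hZ : ∀ z : A × B, z ∈ Z ↔ f z.1 = g z.2 := by
    intro z
    simp [hZdef, LinearMap.mem_ker, sub_eq_zero]
  refine ⟨Z, (LinearMap.fst Λ A B) ∘ₗ Z.subtype, (LinearMap.snd Λ A B) ∘ₗ Z.subtype,
    ?_, ?_, ⟨?_⟩, ⟨?_⟩⟩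
  · intro a; obtain ⟨b, hb⟩ := hg (f a); exact ⟨⟨(a, b), (hZ _).2 hb.symm⟩, rfl⟩
  · intro b; obtain ⟨a, ha⟩ := hf (g b); exact ⟨⟨(a, b), (hZ _).2 ha⟩, rfl⟩
  · -- ker pA ≃ ker g
    refine
      { toFun := fun z => ⟨z.1.1.2, ?_⟩
        map_add' := fun a b => rfl
        map_smul' := fun r a => rfl
        invFun := fun w => ⟨⟨(0, w.1), (hZ _).2 (by simp [show g w.1 = 0 from w.2])⟩, rfl⟩
        left_inv := ?_
        right_inv := fun w => rfl }
    · have h1 : f z.1.1.1 = g z.1.1.2 := (hZ _).1 z.1.2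
      have h2 : z.1.1.1 = 0 := z.2
      show g z.1.1.2 = 0
      rw [← h1, h2, map_zero]
    · rintro ⟨⟨⟨a, b⟩, hab⟩, hk⟩
      have h2 : a = 0 := hk
      apply Subtype.ext; apply Subtype.ext
      show ((0 : A), b) = (a, b)
      rw [h2]
  · -- ker pB ≃ ker f
    refine
      { toFun := fun z => ⟨z.1.1.1, ?_⟩
        map_add' := fun a b => rfl
        map_smul' := fun r a => rfl
        invFun := fun w => ⟨⟨(w.1, 0), (hZ _).2 (by simp [show f w.1 = 0 from w.2])⟩, rfl⟩
        left_inv := ?_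
        right_inv := fun w => rfl }
    · have h1 : f z.1.1.1 = g z.1.1.2 := (hZ _).1 z.1.2
      have h2 : z.1.1.2 = 0 := z.2
      show f z.1.1.1 = 0
      rw [h1, h2, map_zero]
    · rintro ⟨⟨⟨a, b⟩, hab⟩, hk⟩
      have h2 : b = 0 := hk
      apply Subtype.ext; apply Subtype.ext
      show (a, (0 : B)) = (a, b)
      rw [h2]

/-- If `0 → K → E → P → 0` with `P` projective and `Pd1 K`, then `Pd1 E`. -/
theorem pd1_extension {E P : Type u} [AddCommGroup E] [Module Λ E]
    [AddCommGroup P] [Module Λ P] [Module.Projective Λ P]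
    (θ : E →ₗ[Λ] P) (hθ : Function.Surjective θ)
    (h : Pd1 Λ ↥(LinearMap.ker θ)) : Pd1 Λ E := by
  obtain ⟨σ, hσc⟩ := Module.projective_lifting_property θ LinearMap.id hθ
  have hσ : ∀ p, θ (σ p) = p := fun p => DFunLike.congr_fun hσc p
  obtain ⟨T, _, _, u, hT, hsu, hku⟩ := h
  set F : (T × P) →ₗ[Λ] E :=
    ((LinearMap.ker θ).subtype ∘ₗ u) ∘ₗ (LinearMap.fst Λ T P) + σ ∘ₗ (LinearMap.snd Λ T P)
    with hFdef
  have hFapp : ∀ t p, F (t, p) = (u t : E) + σ p := fun t p => rfl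
  have hFs : Function.Surjective F := by
    intro e
    have hw : e - σ (θ e) ∈ LinearMap.ker θ := by simp [hσ]
    obtain ⟨t, ht⟩ := hsu ⟨e - σ (θ e), hw⟩
    refine ⟨(t, θ e), ?_⟩
    rw [hFapp, ht]
    simp
  have hsnd : ∀ w : T × P, w ∈ LinearMap.ker F → w.2 = 0 := by
    rintro ⟨t, p⟩ hw
    have h0 : (u t : E) + σ p = 0 := hw
    have := congrArg θ h0
    simpa [hσ, (u t).2] using this
  have hfst : ∀ w : T × P, w ∈ LinearMap.ker F → u w.1 = 0 := by
    rintro ⟨t, p⟩ hw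
    have hp : p = 0 := hsnd _ hw
    have h0 : (u t : E) + σ p = 0 := hw
    rw [hp, map_zero, add_zero] at h0
    exact Subtype.ext h0
  have hkerF : Module.Projective Λ ↥(LinearMap.ker F) := by
    haveI := hku
    refine Module.Projective.of_equiv' (M := ↥(LinearMap.ker u))
      { toFun := fun w => ⟨(w.1, 0), by
          have hw : u w.1 = 0 := w.2
          show (u w.1 : E) + σ 0 = 0
          rw [hw]; simp⟩
        map_add' := by intro a b; apply Subtype.ext; show ((a.1+b.1 : T), (0:P)) = (a.1+b.1, 0+0); simp
        map_smul' := by intro r a; apply Subtype.ext; show ((r • a.1 : T), (0:P)) = (r•a.1, r•0); simp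
        invFun := fun w => ⟨w.1.1, hfst _ w.2⟩
        left_inv := fun w => rfl
        right_inv := by
          rintro ⟨⟨t, p⟩, hw⟩
          apply Subtype.ext
          show ((t, (0 : P)) : T × P) = (t, p)
          exact Prod.ext rfl (hsnd (t, p) hw).symm }
  exact ⟨T × P, inferInstance, inferInstance, F, inferInstance, hFs, hkerF⟩

/-- If `0 → K → E → P → 0` with `P` projective and `Pd1 E`, then `Pd1 K`. -/
theorem pd1_ker {E P : Type u} [AddCommGroup E] [Module Λ E]
    [AddCommGroup P] [Module Λ P] [Module.Projective Λ P]
    (h : Pd1 Λ E) (θ : E →ₗ[Λ] P) (hθ : Function.Surjective θ) :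
    Pd1 Λ ↥(LinearMap.ker θ) := by
  obtain ⟨σ, hσc⟩ := Module.projective_lifting_property θ LinearMap.id hθ
  have hσ : ∀ p, θ (σ p) = p := fun p => DFunLike.congr_fun hσc p
  obtain ⟨T, _, _, F, hT, hsF, hkF⟩ := h
  set ρ : E →ₗ[Λ] ↥(LinearMap.ker θ) :=
    LinearMap.codRestrict (LinearMap.ker θ) (LinearMap.id - σ ∘ₗ θ)
      (fun e => by simp [hσ]) with hρdef
  have hρ : ∀ e, (ρ e : E) = e - σ (θ e) := fun e => rfl
  set G : T →ₗ[Λ] ↥(LinearMap.ker θ) := ρ ∘ₗ F with hGdef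
  have hGs : Function.Surjective G := by
    rintro ⟨e, he⟩
    obtain ⟨t, ht⟩ := hsF e
    refine ⟨t, Subtype.ext ?_⟩
    show (ρ (F t) : E) = e
    rw [ht, hρ, show θ e = 0 from he, map_zero, sub_zero]
  have hmemG : ∀ t, t ∈ LinearMap.ker G ↔ F t = σ (θ (F t)) := by
    intro t
    constructor
    · intro ht
      have : (ρ (F t) : E) = 0 := congrArg Subtype.val ht
      rw [hρ] at this
      exact sub_eq_zero.mp this
    · intro ht
      apply Subtype.ext
      show (ρ (F t) : E) = 0
      rw [hρ, ← ht, sub_self]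
  set θ' : ↥(LinearMap.ker G) →ₗ[Λ] P := (θ ∘ₗ F) ∘ₗ (LinearMap.ker G).subtype with hθ'def
  have hθ's : Function.Surjective θ' := by
    intro p
    obtain ⟨t, ht⟩ := hsF (σ p)
    have htk : t ∈ LinearMap.ker G := by
      rw [hmemG, ht, hσ]
    exact ⟨⟨t, htk⟩, by show θ (F t) = p; rw [ht, hσ]⟩
  have hkθ' : Module.Projective Λ ↥(LinearMap.ker θ') := by
    haveI := hkF
    refine Module.Projective.of_equiv' (M := ↥(LinearMap.ker F)) ?_
    have hto : ∀ w : ↥(LinearMap.ker F), w.1 ∈ LinearMap.ker G := by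
      intro w
      rw [hmemG, show F w.1 = 0 from w.2, map_zero, map_zero]
    have hfrom : ∀ z : ↥(LinearMap.ker θ'), z.1.1 ∈ LinearMap.ker F := by
      intro z
      have h1 : F z.1.1 = σ (θ (F z.1.1)) := (hmemG _).1 z.1.2
      have h2 : θ (F z.1.1) = 0 := z.2
      show F z.1.1 = 0
      rw [h1, h2, map_zero]
    exact
      { toFun := fun w => ⟨⟨w.1, hto w⟩, by
          show θ (F w.1) = 0
          rw [show F w.1 = 0 from w.2, map_zero]⟩
        map_add' := fun a b => rfl
        map_smul' := fun r a => rfl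
        invFun := fun z => ⟨z.1.1, hfrom z⟩
        left_inv := fun w => rfl
        right_inv := fun z => rfl }
  have hkG : Module.Projective Λ ↥(LinearMap.ker G) :=
    projective_of_surjective_of_ker θ' hθ's hkθ'
  exact ⟨T, inferInstance, inferInstance, G, hT, hGs, hkG⟩

/-- Key lemma: over a ring of global dimension at most `2`, every submodule of a
finitely generated projective module has projective dimension at most `1`. -/
theorem pd1_submodule (gl : gldimLE Λ 2) (X : Type u) [AddCommGroup X] [Module Λ X]
    [Module.Finite Λ X] [Module.Projective Λ X] (V : Submodule Λ X) : Pd1 Λ ↥V := by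
  have h2 : pdLE Λ 2 (ModuleCat.of Λ (X ⧸ V)) :=
    gl (ModuleCat.of Λ (X ⧸ V)) (inferInstanceAs (Module.Finite Λ (X ⧸ V)))
  obtain ⟨P, h₁, hP, hs₁, h1⟩ := h2
  haveI := hP
  have hPd1 : Pd1 Λ ↥(LinearMap.ker h₁) := (pd1_iff _).mpr h1
  obtain ⟨Z, pA, pB, hpA, hpB, ⟨eB⟩, ⟨eA⟩⟩ :=
    pullback_exists (V.mkQ) (h₁ : ↥P →ₗ[Λ] (X ⧸ V)) (Submodule.mkQ_surjective V) hs₁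
  have hZ1 : Pd1 Λ ↥(LinearMap.ker pA) := pd1_congr eB.symm hPd1
  have hZ : Pd1 Λ ↥Z := pd1_extension pA hpA hZ1
  have hkB : Pd1 Λ ↥(LinearMap.ker pB) := pd1_ker hZ pB hpB
  have hkq : Pd1 Λ ↥(LinearMap.ker V.mkQ) := pd1_congr eA hkB
  rwa [Submodule.ker_mkQ] at hkq

/-- Schanuel-type transfer of projectivity of kernels between two projective
presentations of the same module. -/
theorem projective_ker_transfer {A B C : Type u} [AddCommGroup A] [Module Λ A]
    [AddCommGroup B] [Module Λ B] [AddCommGroup C] [Module Λ C]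
    [Module.Projective Λ A] [Module.Projective Λ B]
    (f : A →ₗ[Λ] C) (g : B →ₗ[Λ] C) (hf : Function.Surjective f) (hg : Function.Surjective g)
    (h : Module.Projective Λ (LinearMap.ker f)) :
    Module.Projective Λ (LinearMap.ker g) := by
  obtain ⟨Z, pA, pB, hpA, hpB, ⟨eB⟩, ⟨eA⟩⟩ := pullback_exists f g hf hg
  have h1 : Module.Projective Λ ↥(LinearMap.ker pB) := by
    haveI := h
    exact Module.Projective.of_equiv eA.symm
  have hZ : Module.Projective Λ ↥Z := projective_of_surjective_of_ker pB hpB h1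
  obtain ⟨σ, hσc⟩ := Module.projective_lifting_property pA LinearMap.id hpA
  have hσ : ∀ a, pA (σ a) = a := fun a => DFunLike.congr_fun hσc a
  set r : ↥Z →ₗ[Λ] ↥(LinearMap.ker pA) :=
    LinearMap.codRestrict (LinearMap.ker pA) (LinearMap.id - σ ∘ₗ pA)
      (fun z => by simp [hσ]) with hrdef
  have hri : r ∘ₗ (LinearMap.ker pA).subtype = LinearMap.id := by
    apply LinearMap.ext
    intro z
    apply Subtype.ext
    show z.1 - σ (pA z.1) = z.1
    rw [show pA z.1 = 0 from z.2, map_zero, sub_zero]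
  have h2 : Module.Projective Λ ↥(LinearMap.ker pA) := by
    haveI := hZ
    exact Module.Projective.of_split (LinearMap.ker pA).subtype r hri
  haveI := h2
  exact Module.Projective.of_equiv eB

/-- A cyclic module embedding into a projective module has projective dimension
at most `1`, over a ring of global dimension at most `2`. -/
theorem pd1_of_embeds_projective (gl : gldimLE Λ 2) {S' Q : Type u}
    [AddCommGroup S'] [Module Λ S'] [AddCommGroup Q] [Module Λ Q] [hQ : Module.Projective Λ Q]
    (x : S') (hx : Submodule.span Λ {x} = ⊤)
    (θ₀ : S' →ₗ[Λ] Q) (hθ : Function.Injective θ₀) : Pd1 Λ S' := by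
  classical
  obtain ⟨sQ, hsQ⟩ := Module.projective_def.mp hQ
  set θ : S' →ₗ[Λ] (Q →₀ Λ) := sQ ∘ₗ θ₀ with hθdef
  have hθi : Function.Injective θ := by
    have : Function.Injective sQ := hsQ.injective
    exact this.comp hθ
  set T : Finset Q := (θ x).support with hTdef
  set Ψ : S' →ₗ[Λ] (↥T → Λ) :=
    LinearMap.pi (fun t : ↥T => (Finsupp.lapply (t : Q)) ∘ₗ θ) with hΨdef
  have key : ∀ y, Ψ y = 0 → y = 0 := by
    intro y hy
    have hyy : y ∈ Submodule.span Λ {x} := hx ▸ Submodule.mem_top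
    obtain ⟨r, rfl⟩ := Submodule.mem_span_singleton.mp hyy
    have h2 : θ (r • x) = 0 := by
      ext a
      by_cases ha : a ∈ T
      · have := congrFun hy ⟨a, ha⟩
        simpa [hΨdef] using this
      · have hsupp : a ∉ (θ (r • x)).support := by
          intro hmem
          apply ha
          have : (θ (r • x)).support ⊆ (θ x).support := by
            rw [map_smul]
            exact Finsupp.support_smul
          exact this hmem
        simpa using Finsupp.notMem_support_iff.mp hsupp
    apply hθi
    rw [h2, map_zero]
  have hΨi : Function.Injective Ψ := by
    intro a b hab
    have : Ψ (a - b) = 0 := by rw [map_sub, hab, sub_self]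
    have := key _ this
    exact sub_eq_zero.mp this
  have hV : Pd1 Λ ↥(LinearMap.range Ψ) := pd1_submodule gl (↥T → Λ) (LinearMap.range Ψ)
  exact pd1_congr (LinearEquiv.ofInjective Ψ hΨi).symm hV

end AusAux

set_option maxHeartbeats 1600000 in
set_option synthInstance.maxHeartbeats 400000 in
open AusAux in
/-- Over a finite dimensional Auslander algebra, a module of projective dimension at
most `1` has no simple submodule of projective dimension `2`. -/
theorem stmt_11 (k Λ : Type u) [Field k] [Ring Λ] [Algebra k Λ] [FiniteDimensional k Λ]
    (hΛ : IsAuslander Λ)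
    (M : Type u) [AddCommGroup M] [Module Λ M] [Module.Finite Λ M]
    (hM : pdLE Λ 1 (ModuleCat.of Λ M))
    (S : Submodule Λ M) (hS : IsSimpleModule Λ ↥S)
    (hpdS : projDim Λ (ModuleCat.of Λ ↥S) = 2) :
    False := by
  classical
  obtain ⟨gl, I₀, I₁, fI, gI, injI₀, projI₀, injI₁, projI₁, hfI, hkergI⟩ := hΛ
  haveI := projI₁
  -- S has projective dimension > 1
  have hnot : ¬ Pd1 Λ ↥S := by
    intro h
    have h1 : pdLE Λ 1 (ModuleCat.of Λ ↥S) := (pd1_iff _).mp h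
    have h2 : projDim Λ (ModuleCat.of Λ ↥S) ≤ ((1 : ℕ) : ℕ∞) := sInf_le ⟨1, h1, rfl⟩
    rw [hpdS] at h2
    norm_num at h2
  -- a generator of S
  haveI : IsSimpleOrder (Submodule Λ ↥S) := hS.toIsSimpleOrder
  have hex : ∃ x : ↥S, x ≠ 0 := by
    by_contra hcon
    push_neg at hcon
    refine bot_ne_top (α := Submodule Λ ↥S) ?_
    ext y
    simp [hcon y]
  obtain ⟨x, hx0⟩ := hex
  have hxspan : Submodule.span Λ {x} = ⊤ := by
    rcases eq_bot_or_eq_top (Submodule.span Λ {x}) with hb | ht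
    · exfalso
      apply hx0
      have hmem : x ∈ Submodule.span Λ ({x} : Set ↥S) := Submodule.mem_span_singleton_self x
      rw [hb] at hmem
      simpa using hmem
    · exact ht
  -- Λ is left noetherian
  haveI hNoe : IsNoetherianRing Λ := isNoetherian_of_tower k inferInstance
  -- the given presentation of M
  obtain ⟨P₀, fM, hP₀, hfM, hkfM⟩ := hM
  haveI := hP₀
  haveI hkfM' : Module.Projective Λ ↥(LinearMap.ker fM) := hkfM
  -- a finite free presentation of M
  obtain ⟨n, q, hq⟩ := Module.Finite.exists_fin' Λ M
  have hkq : Module.Projective Λ ↥(LinearMap.ker q) :=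
    projective_ker_transfer fM q hfM hq hkfM'
  haveI : Module.Finite Λ ↥(LinearMap.ker q) :=
    Module.Finite.iff_fg.mpr (IsNoetherian.noetherian _)
  obtain ⟨m, πm, hπm⟩ := Module.Finite.exists_fin' Λ ↥(LinearMap.ker q)
  obtain ⟨sK, hsKc⟩ := by
    haveI := hkq
    exact Module.projective_lifting_property πm LinearMap.id hπm
  have hsK : ∀ w, πm (sK w) = w := fun w => DFunLike.congr_fun hsKc w
  -- N, the preimage of S in the finite free module
  set N : Submodule Λ (Fin n → Λ) := S.comap q with hNdef
  set g : ↥N →ₗ[Λ] ↥S :=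
    LinearMap.codRestrict S (q ∘ₗ N.subtype) (fun z => z.2) with hgdef
  have hgval : ∀ z : ↥N, (g z : M) = q z.1 := fun z => rfl
  have hg : Function.Surjective g := by
    rintro ⟨s, hs⟩
    obtain ⟨a, ha⟩ := hq s
    refine ⟨⟨a, ?_⟩, ?_⟩
    · show q a ∈ S
      rw [ha]; exact hs
    · apply Subtype.ext
      show q a = s
      exact ha
  -- ker g ≃ ker q
  set eK : ↥(LinearMap.ker g) ≃ₗ[Λ] ↥(LinearMap.ker q) :=
    { toFun := fun z => ⟨z.1.1, by
        show q z.1.1 = 0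
        exact congrArg Subtype.val z.2⟩
      map_add' := fun a b => rfl
      map_smul' := fun r a => rfl
      invFun := fun w => ⟨⟨w.1, by
          show q w.1 ∈ S
          rw [show q w.1 = 0 from w.2]
          exact S.zero_mem⟩, by
        apply Subtype.ext
        show q w.1 = 0
        exact w.2⟩
      left_inv := fun z => rfl
      right_inv := fun w => rfl } with heKdef
  -- a transported split presentation of ker g
  set π' : (Fin m → Λ) →ₗ[Λ] ↥(LinearMap.ker g) := eK.symm.toLinearMap ∘ₗ πm with hπ'def
  set s' : ↥(LinearMap.ker g) →ₗ[Λ] (Fin m → Λ) := sK ∘ₗ eK.toLinearMap with hs'def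
  have hπs : ∀ z, π' (s' z) = z := by
    intro z
    show eK.symm (πm (sK (eK z))) = z
    rw [hsK, LinearEquiv.symm_apply_apply]
  -- extend the copresentation of ker g along N
  set e : ↥(LinearMap.ker g) →ₗ[Λ] (Fin m → ↥I₀) := (fI.compLeft (Fin m)) ∘ₗ s' with hedef
  have hJinj : Module.Injective Λ (Fin m → ↥I₀) := injective_pi injI₀
  obtain ⟨h, hh⟩ := hJinj.out (X := ↥(LinearMap.ker g)) (Y := ↥N) (LinearMap.ker g).subtype (Submodule.injective_subtype (LinearMap.ker g)) e
  set ψ : ↥N →ₗ[Λ] (Fin m → ↥I₁) := (gI.compLeft (Fin m)) ∘ₗ h with hψdef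
  have hψval : ∀ (y : ↥N) (j : Fin m), ψ y j = gI (h y j) := fun y j => rfl
  have heval : ∀ (z : ↥(LinearMap.ker g)) (j : Fin m), e z j = fI (s' z j) := fun z j => rfl
  have hψg : LinearMap.ker g ≤ LinearMap.ker ψ := by
    intro y hy
    have h1 : h y = e ⟨y, hy⟩ := hh ⟨y, hy⟩
    show ψ y = 0
    funext j
    rw [hψval, h1, heval]
    have hm : fI (s' ⟨y, hy⟩ j) ∈ LinearMap.ker gI := by
      rw [hkergI]
      exact LinearMap.mem_range_self fI _
    exact hm
  by_cases hc : ∀ j : Fin m, Submodule.map g (LinearMap.ker ((LinearMap.proj j) ∘ₗ ψ)) = ⊤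
  · -- in this case `ψ = 0`; the sequence splits and S embeds in a finite free module
    have hψ0 : ψ = 0 := by
      apply LinearMap.ext
      intro y
      funext j
      have h2 : g y ∈ Submodule.map g (LinearMap.ker ((LinearMap.proj j) ∘ₗ ψ)) := by
        rw [hc j]
        exact Submodule.mem_top
      obtain ⟨y', hy', hgy⟩ := h2
      have h3 : y - y' ∈ LinearMap.ker g := by
        rw [LinearMap.mem_ker, map_sub, hgy, sub_self]
      have h4 : ψ (y - y') = 0 := hψg h3
      have h5 : ψ y j = ψ y' j := by
        have h6 := congrFun h4 j
        rw [map_sub] at h6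
        have h7 : ψ y j - ψ y' j = 0 := by simpa using h6
        exact sub_eq_zero.mp h7
      rw [h5]
      exact hy'
    have hmem : ∀ (y : ↥N) (j : Fin m), h y j ∈ LinearMap.range fI := by
      intro y j
      rw [← hkergI]
      show gI (h y j) = 0
      rw [← hψval y j, hψ0]
      rfl
    set eΛ : Λ ≃ₗ[Λ] ↥(LinearMap.range fI) := LinearEquiv.ofInjective fI hfI with heΛdef
    set h' : ↥N →ₗ[Λ] (Fin m → Λ) := LinearMap.pi (fun j =>
      eΛ.symm.toLinearMap ∘ₗ
        (LinearMap.codRestrict (LinearMap.range fI)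
          ((LinearMap.proj j : (Fin m → ↥I₀) →ₗ[Λ] ↥I₀) ∘ₗ h)
          (fun y => hmem y j))) with hh'def
    have hfh' : ∀ (y : ↥N) (j : Fin m), fI (h' y j) = h y j := by
      intro y j
      show fI (eΛ.symm ⟨h y j, hmem y j⟩) = h y j
      have h6 := eΛ.apply_symm_apply ⟨h y j, hmem y j⟩
      have h7 := congrArg Subtype.val h6
      rwa [LinearEquiv.ofInjective_apply] at h7
    have hh'ι : ∀ z : ↥(LinearMap.ker g), h' z.1 = s' z := by
      intro z
      funext j
      apply hfI
      rw [hfh']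
      have h1 : h z.1 = e z := hh z
      rw [h1, heval]
    set ρ : ↥N →ₗ[Λ] ↥(LinearMap.ker g) := π' ∘ₗ h' with hρdef
    set σm : ↥N →ₗ[Λ] ↥N := LinearMap.id - (LinearMap.ker g).subtype ∘ₗ ρ with hσmdef
    have hσmval : ∀ y : ↥N, σm y = y - (ρ y).1 := fun y => rfl
    have hker1 : LinearMap.ker σm ≤ LinearMap.ker g := by
      intro y hy
      have h1 : y - (ρ y).1 = 0 := hy
      have h2 : y = (ρ y).1 := by rwa [sub_eq_zero] at h1
      show g y = 0
      rw [h2]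
      exact (ρ y).2
    have hker2 : LinearMap.ker g ≤ LinearMap.ker σm := by
      intro y hy
      show σm y = 0
      rw [hσmval]
      have h1 : h' y = s' ⟨y, hy⟩ := hh'ι ⟨y, hy⟩
      have h2 : ρ y = ⟨y, hy⟩ := by
        show π' (h' y) = _
        rw [h1, hπs]
      rw [h2]
      exact sub_self y
    set τ : ↥S →ₗ[Λ] ↥N :=
      (Submodule.liftQ (LinearMap.ker g) σm hker2) ∘ₗ
        (g.quotKerEquivOfSurjective hg).symm.toLinearMap with hτdef
    have hτi : Function.Injective τ := by
      rw [hτdef, LinearMap.coe_comp]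
      apply Function.Injective.comp
      · rw [← LinearMap.ker_eq_bot]
        exact Submodule.ker_liftQ_eq_bot _ _ hker2 hker1
      · exact (g.quotKerEquivOfSurjective hg).symm.injective
    have hemb : Function.Injective ⇑(N.subtype ∘ₗ τ) := by
      rw [LinearMap.coe_comp]
      exact (Submodule.injective_subtype N).comp hτi
    exact hnot (pd1_of_embeds_projective gl x hxspan (N.subtype ∘ₗ τ) hemb)
  · -- some component of ψ induces an embedding of S into the projective module I₁
    push_neg at hc
    obtain ⟨j, hj⟩ := hc
    have hbot : Submodule.map g
        (LinearMap.ker ((LinearMap.proj j : (Fin m → ↥I₁) →ₗ[Λ] ↥I₁) ∘ₗ ψ)) = ⊥ :=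
      (eq_bot_or_eq_top _).resolve_right hj
    have hle : LinearMap.ker ((LinearMap.proj j) ∘ₗ ψ) ≤ LinearMap.ker g := by
      intro y hy
      have h1 : g y ∈ Submodule.map g (LinearMap.ker ((LinearMap.proj j) ∘ₗ ψ)) :=
        ⟨y, hy, rfl⟩
      rw [hbot] at h1
      simpa using h1
    have hge : LinearMap.ker g ≤ LinearMap.ker ((LinearMap.proj j) ∘ₗ ψ) := by
      intro y hy
      have h1 : ψ y = 0 := hψg hy
      show ψ y j = 0
      rw [h1]
      rfl
    set φj : ↥S →ₗ[Λ] ↥I₁ :=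
      (Submodule.liftQ (LinearMap.ker g) ((LinearMap.proj j) ∘ₗ ψ) hge) ∘ₗ
        (g.quotKerEquivOfSurjective hg).symm.toLinearMap with hφjdef
    have hφji : Function.Injective φj := by
      rw [hφjdef, LinearMap.coe_comp]
      apply Function.Injective.comp
      · rw [← LinearMap.ker_eq_bot]
        exact Submodule.ker_liftQ_eq_bot _ _ hge hle
      · exact (g.quotKerEquivOfSurjective hg).symm.injective
    exact hnot (pd1_of_embeds_projective gl x hxspan φj hφji)
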